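/- arXiv:1404.4575 — 4 statements merged into one kernel-verified Lean document; each statement's English description precedes it below -/
import Mathlib

section
/- Fix an integer r ≥ 2 and let δ = 1/r. Let H be the hypergraph on a vertex set V of n = r vertices whose only hyperedge is e = V. Then φ*_{H,δ} = 1, and any family (ū)_{u∈V} of mutually orthogonal vectors, each of norm 1/√r, in a real inner product space is a feasible SDP solution for H-SSE with parameter δ whose SDP value equals 2/r. In particular, the integrality gap of the SDP relaxation for H-SSE is at least r/2 = 1/(2δ). -/
open scoped Classical BigOperators RealInnerProductSpace

noncomputable section

/-- A hyperedge `e` is cut by a set `S` if `e ∩ S ≠ ∅` and `e \ S ≠ ∅`. -/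
def Cuts {V : Type*} [DecidableEq V] (S e : Finset V) : Prop :=
  (e ∩ S).Nonempty ∧ (e \ S).Nonempty

/-- Number of hyperedges (indexed by `ι`) cut by `S`. -/
def cutCount {V ι : Type*} [DecidableEq V] [Fintype ι]
    (ed : ι → Finset V) (S : Finset V) : ℕ :=
  (Finset.univ.filter (fun i => Cuts S (ed i))).card

/-- `max_{u,v ∈ e} ‖x u - x v‖²`. -/
def maxDistSq {V H : Type*} [NormedAddCommGroup H] (x : V → H) (e : Finset V) : ℝ :=
  sSup {d : ℝ | ∃ u ∈ e, ∃ v ∈ e, d = ‖x u - x v‖ ^ 2}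

/-- `max_{u,v ∈ e} ‖x u - x v‖`. -/
def maxDist {V H : Type*} [NormedAddCommGroup H] (x : V → H) (e : Finset V) : ℝ :=
  sSup {d : ℝ | ∃ u ∈ e, ∃ v ∈ e, d = ‖x u - x v‖}

/-- `min_{w ∈ e} ‖x w‖`. -/
def minNorm {V H : Type*} [NormedAddCommGroup H] (x : V → H) (e : Finset V) : ℝ :=
  sInf {d : ℝ | ∃ w ∈ e, d = ‖x w‖}

/-- SDP value of a vector solution. -/
def sdpValue {V ι H : Type*} [Fintype ι] [NormedAddCommGroup H]
    (ed : ι → Finset V) (x : V → H) : ℝ :=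
  ∑ i : ι, maxDistSq x (ed i)

/-- Expansion of a set `S` in the hypergraph. -/
def expansion {V ι : Type*} [Fintype V] [DecidableEq V] [Fintype ι]
    (ed : ι → Finset V) (S : Finset V) : ℝ :=
  (cutCount ed S : ℝ) / min (S.card : ℝ) ((Sᶜ : Finset V).card : ℝ)

/-- Small set expansion `φ*_{H,δ}`. -/
def phiStar {V ι : Type*} [Fintype V] [DecidableEq V] [Fintype ι]
    (ed : ι → Finset V) (δ : ℝ) : ℝ :=
  sInf {c : ℝ | ∃ S : Finset V, S.Nonempty ∧ (S.card : ℝ) ≤ δ * Fintype.card V ∧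
                c = expansion ed S}

/-- Feasibility for the SDP relaxation of H-SSE with parameter `δ`. -/
def SDPFeasible {V H : Type*} [Fintype V] [NormedAddCommGroup H] [InnerProductSpace ℝ H]
    (x : V → H) (δ : ℝ) : Prop :=
  (∀ u : V, ∑ v : V, (⟪x u, x v⟫ : ℝ) ≤ δ * (Fintype.card V : ℝ) * ‖x u‖ ^ 2) ∧
  (∑ u : V, ‖x u‖ ^ 2 = 1) ∧
  (∀ u v w : V, ‖x u - x w‖ ^ 2 ≤ ‖x u - x v‖ ^ 2 + ‖x v - x w‖ ^ 2) ∧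
  (∀ u v : V, 0 ≤ (⟪x u, x v⟫ : ℝ) ∧ (⟪x u, x v⟫ : ℝ) ≤ ‖x u‖ ^ 2)

/-- The `ℓ2²`-triangle inequalities for a family of vectors. -/
def L22 {V H : Type*} [NormedAddCommGroup H] [InnerProductSpace ℝ H] (x : V → H) : Prop :=
  (∀ u v w : V, ‖x u - x w‖ ^ 2 ≤ ‖x u - x v‖ ^ 2 + ‖x v - x w‖ ^ 2) ∧
  (∀ u v : V, 0 ≤ (⟪x u, x v⟫ : ℝ) ∧ (⟪x u, x v⟫ : ℝ) ≤ ‖x u‖ ^ 2)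

/-- Probability of an event under a finitely supported distribution. -/
def Pr {Ω : Type*} [Fintype Ω] (μ : Ω → ℝ) (P : Ω → Prop) : ℝ :=
  ∑ ω : Ω, if P ω then μ ω else 0

/-- A finitely supported probability distribution. -/
def IsProbDist {Ω : Type*} [Fintype Ω] (μ : Ω → ℝ) : Prop :=
  (∀ ω, 0 ≤ μ ω) ∧ ∑ ω : Ω, μ ω = 1

/-- `η(u)` for a choice `c` of subsets `e° ⊆ e`. -/
def eta {V ι : Type*} [Fintype ι] (ed c : ι → Finset V) (u : V) : ℝ :=
  ∑ i : ι, if u ∈ c i then Real.logb 2 ((ed i).card) / ((c i).card : ℝ) else 0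

/-- `η̂(H)`: the minimum over all valid choices `(e°)_{e∈E}` of `max_{u∈V} η(u)`. -/
def etaHat {V ι : Type*} [Fintype V] [Fintype ι] (ed : ι → Finset V) : ℝ :=
  sInf {b : ℝ | ∃ c : ι → Finset V, (∀ i, c i ⊆ ed i ∧ (c i).Nonempty) ∧
                b = ⨆ u : V, eta ed c u}

theorem stmt_7 {V : Type*} [Fintype V] [DecidableEq V]
    {H : Type*} [NormedAddCommGroup H] [InnerProductSpace ℝ H]
    (r : ℕ) (hr : 2 ≤ r) (hV : Fintype.card V = r)
    (x : V → H) (hnorm : ∀ u, ‖x u‖ = 1 / Real.sqrt r)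
    (horth : ∀ u v : V, u ≠ v → (⟪x u, x v⟫ : ℝ) = 0) :
    phiStar (fun _ : Unit => (Finset.univ : Finset V)) (1 / r) = 1 ∧
    SDPFeasible x (1 / r) ∧
    sdpValue (fun _ : Unit => (Finset.univ : Finset V)) x = 2 / r ∧
    (r : ℝ) / 2 * sdpValue (fun _ : Unit => (Finset.univ : Finset V)) x ≤
      phiStar (fun _ : Unit => (Finset.univ : Finset V)) (1 / r) := by
  have hr0 : (0:ℝ) < r := by positivity
  have hrne : (r:ℝ) ≠ 0 := ne_of_gt hr0
  have hsq : ∀ u, ‖x u‖ ^ 2 = 1 / r := by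
    intro u
    rw [hnorm, div_pow, one_pow, Real.sq_sqrt (le_of_lt hr0)]
  have hself : ∀ u, (⟪x u, x u⟫ : ℝ) = 1 / r := by
    intro u
    rw [real_inner_self_eq_norm_sq, hsq]
  have hdist : ∀ u v : V, ‖x u - x v‖ ^ 2 = if u = v then (0:ℝ) else 2 / (r:ℝ) := by
    intro u v
    rw [@norm_sub_sq_real, hsq, hsq]
    by_cases h : u = v
    · simp [h, hself]; rw [hsq]; ring
    · rw [horth u v h]; simp [h]; ring
  -- phiStar = 1
  have hVpos : 0 < Fintype.card V := by omega
  obtain ⟨a0⟩ := Fintype.card_pos_iff.mp hVpos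
  have hδr : (1 / (r:ℝ)) * (Fintype.card V : ℝ) = 1 := by
    rw [hV]; field_simp
  have hcut : ∀ S : Finset V, S.card = 1 →
      cutCount (fun _ : Unit => (Finset.univ : Finset V)) S = 1 := by
    intro S hS
    have hc : Cuts S (Finset.univ : Finset V) := by
      constructor
      · rw [Finset.univ_inter]
        exact Finset.card_pos.mp (by omega)
      · rw [← Finset.compl_eq_univ_sdiff]
        apply Finset.card_pos.mp
        rw [Finset.card_compl, hV, hS]; omega
    unfold cutCount
    rw [Finset.filter_true_of_mem (fun i _ => hc)]
    simp
  have hexp : ∀ S : Finset V, S.card = 1 →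
      expansion (fun _ : Unit => (Finset.univ : Finset V)) S = 1 := by
    intro S hS
    unfold expansion
    rw [hcut S hS, hS, Finset.card_compl, hV, hS]
    have : ((r - 1 : ℕ) : ℝ) = (r:ℝ) - 1 := by
      push_cast [Nat.cast_sub (by omega : 1 ≤ r)]; ring
    rw [this]
    have hmin : min (1:ℝ) ((r:ℝ) - 1) = 1 := by
      apply min_eq_left
      have : (2:ℝ) ≤ r := by exact_mod_cast hr
      linarith
    simp [hmin]
  have hset : {c : ℝ | ∃ S : Finset V, S.Nonempty ∧
      (S.card : ℝ) ≤ (1 / r) * Fintype.card V ∧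
      c = expansion (fun _ : Unit => (Finset.univ : Finset V)) S} = {1} := by
    ext c
    simp only [Set.mem_setOf_eq, Set.mem_singleton_iff]
    constructor
    · rintro ⟨S, hne, hcard, rfl⟩
      rw [hδr] at hcard
      have h1 : S.card = 1 := by
        have := Finset.card_pos.mpr hne
        have : (S.card : ℝ) ≤ 1 := hcard
        have h2 : S.card ≤ 1 := by exact_mod_cast this
        omega
      exact hexp S h1
    · rintro rfl
      exact ⟨{a0}, Finset.singleton_nonempty a0,
        by rw [hδr, Finset.card_singleton]; norm_num,
        (hexp {a0} (Finset.card_singleton a0)).symm⟩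
  have hphi : phiStar (fun _ : Unit => (Finset.univ : Finset V)) (1 / r) = 1 := by
    unfold phiStar; rw [hset, csInf_singleton]
  -- sdpValue = 2/r
  have hcard2 : 1 < Fintype.card V := by omega
  obtain ⟨a, b, hab⟩ := Fintype.exists_pair_of_one_lt_card hcard2
  have hbdd : ∀ d ∈ {d : ℝ | ∃ u ∈ (Finset.univ : Finset V), ∃ v ∈ (Finset.univ : Finset V),
      d = ‖x u - x v‖ ^ 2}, d ≤ 2 / r := by
    rintro d ⟨u, -, v, -, rfl⟩
    rw [hdist]
    split_ifs
    · positivity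
    · exact le_rfl
  have hmds : maxDistSq x (Finset.univ : Finset V) = 2 / r := by
    unfold maxDistSq
    apply le_antisymm
    · exact csSup_le ⟨‖x a - x a‖ ^ 2, a, Finset.mem_univ a, a, Finset.mem_univ a, rfl⟩ hbdd
    · exact le_csSup ⟨(2:ℝ) / r, fun d hd => hbdd d hd⟩
        ⟨a, Finset.mem_univ a, b, Finset.mem_univ b, by rw [hdist]; simp [hab]⟩
  have hsdp : sdpValue (fun _ : Unit => (Finset.univ : Finset V)) x = 2 / r := by
    unfold sdpValue
    simp [hmds]
  refine ⟨hphi, ?_, hsdp, ?_⟩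
  · refine ⟨?_, ?_, ?_, ?_⟩
    · intro u
      have : ∑ v : V, (⟪x u, x v⟫ : ℝ) = 1 / r := by
        rw [Finset.sum_eq_single u (fun v _ hv => horth u v (Ne.symm hv)) (by simp)]
        exact hself u
      rw [this, hsq, hV]
      field_simp
      exact le_rfl
    · rw [Finset.sum_congr rfl (fun u _ => hsq u)]
      rw [Finset.sum_const, Finset.card_univ, hV]
      rw [nsmul_eq_mul]
      field_simp
    · intro u v w
      rw [hdist, hdist, hdist]
      by_cases huw : u = w
      · simp [huw]
        split <;> split <;> positivity
      · simp [huw]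
        by_cases huv : u = v
        · subst huv; simp [huw]
        · by_cases hvw : v = w
          · subst hvw; simp [huv]
          · simp [huv, hvw]; positivity
    · intro u v
      rw [hsq]
      by_cases h : u = v
      · subst h; rw [hself]; exact ⟨by positivity, le_rfl⟩
      · rw [horth u v h]; exact ⟨le_rfl, by positivity⟩
  · rw [hsdp, hphi]
    field_simp
    exact le_rfl

end
end

section
/- Let m > 4 be a real number, let n = r = ⌈m⌉, and let V be a set of n vertices. Suppose a random subset S ⊆ V (a probability distribution over subsets of V) satisfies, for some α > 0 and D ≥ 0: (1) Pr(u ∈ S) = α/r for every u ∈ V; (2) Pr(u ∈ S and v ∈ S) ≤ α/(mr) for all u ≠ v in V; and (3) Pr(S ≠ ∅ and S ≠ V) ≤ α·D·(2/r). Then D ≥ ⌈m⌉/4. -/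
open scoped Classical BigOperators RealInnerProductSpace

noncomputable section

theorem stmt_8 {V : Type*} [Fintype V] [DecidableEq V]
    (m : ℝ) (hm : 4 < m) (hV : Fintype.card V = ⌈m⌉₊)
    (μ : Finset V → ℝ) (hμ : IsProbDist μ)
    (α D : ℝ) (hα : 0 < α) (hD : 0 ≤ D)
    (h1 : ∀ u : V, Pr μ (fun S => u ∈ S) = α / (⌈m⌉₊ : ℝ))
    (h2 : ∀ u v : V, u ≠ v →
      Pr μ (fun S => u ∈ S ∧ v ∈ S) ≤ α / (m * (⌈m⌉₊ : ℝ)))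
    (h3 : Pr μ (fun S => S ≠ ∅ ∧ S ≠ Finset.univ) ≤ α * D * (2 / (⌈m⌉₊ : ℝ))) :
    (⌈m⌉₊ : ℝ) / 4 ≤ D := by
  classical
  obtain ⟨hμ0, hμ1⟩ := hμ
  have hm0 : (0:ℝ) ≤ m := by linarith
  have hmpos : (0:ℝ) < m := by linarith
  set r : ℝ := (⌈m⌉₊ : ℝ) with hrdef
  have hmr : m ≤ r := Nat.le_ceil m
  have hrm : r ≤ m + 1 := by
    have := Nat.ceil_lt_add_one hm0
    simp only [hrdef]
    linarith
  have h5 : (5:ℕ) ≤ ⌈m⌉₊ := by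
    have h4 : (4:ℕ) < ⌈m⌉₊ := Nat.lt_ceil.mpr (by exact_mod_cast hm)
    omega
  have hr5 : (5:ℝ) ≤ r := by simp only [hrdef]; exact_mod_cast h5
  have hr0 : (0:ℝ) < r := by linarith
  have hV2 : 1 < Fintype.card V := by rw [hV]; omega
  have hne : Nonempty V := Fintype.card_pos_iff.mp (by omega)
  have hEne : (∅ : Finset V) ≠ Finset.univ :=
    Ne.symm (Finset.nonempty_iff_ne_empty.mp Finset.univ_nonempty)
  have hcardr : ((Finset.univ : Finset V).card : ℝ) = r := by
    rw [Finset.card_univ, hV]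
  -- first moment
  have hA : ∑ S : Finset V, μ S * (S.card : ℝ) = α := by
    have step : ∀ S : Finset V, μ S * (S.card:ℝ) = ∑ u : V, (if u ∈ S then μ S else 0) := by
      intro S
      rw [Finset.sum_ite_mem, Finset.univ_inter, Finset.sum_const, nsmul_eq_mul, mul_comm]
    calc ∑ S : Finset V, μ S * (S.card:ℝ)
        = ∑ S : Finset V, ∑ u : V, (if u ∈ S then μ S else 0) := by simp_rw [step]
      _ = ∑ u : V, ∑ S : Finset V, (if u ∈ S then μ S else 0) := Finset.sum_comm
      _ = ∑ u : V, Pr μ (fun S => u ∈ S) := by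
          refine Finset.sum_congr rfl fun u _ => ?_
          unfold Pr
          exact Finset.sum_congr rfl fun S _ => by split <;> rfl
      _ = ∑ _u : V, α / r := by simp_rw [h1]
      _ = α := by
          rw [Finset.sum_const, Finset.card_univ, hV, nsmul_eq_mul]
          field_simp
          exact hrdef.symm
  -- second moment
  have step2 : ∀ S : Finset V, μ S * (S.card:ℝ)^2
      = ∑ u : V, ∑ v : V, (if u ∈ S ∧ v ∈ S then μ S else 0) := by
    intro S
    have inner : ∀ u : V, ∑ v : V, (if u ∈ S ∧ v ∈ S then μ S else 0)
        = (if u ∈ S then (S.card:ℝ) * μ S else 0) := by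
      intro u
      by_cases h : u ∈ S
      · simp only [h, true_and, if_true]
        rw [Finset.sum_ite_mem, Finset.univ_inter, Finset.sum_const, nsmul_eq_mul]
      · simp [h]
    simp_rw [inner]
    rw [Finset.sum_ite_mem, Finset.univ_inter, Finset.sum_const, nsmul_eq_mul]
    ring
  have hB : ∑ S : Finset V, μ S * (S.card:ℝ)^2 ≤ α * (m + r - 1) / m := by
    have hBeq : ∑ S : Finset V, μ S * (S.card:ℝ)^2
        = ∑ u : V, ∑ v : V, Pr μ (fun S => u ∈ S ∧ v ∈ S) := by
      simp_rw [step2]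
      rw [Finset.sum_comm]
      refine Finset.sum_congr rfl fun u _ => ?_
      rw [Finset.sum_comm]
      refine Finset.sum_congr rfl fun v _ => ?_
      unfold Pr
      exact Finset.sum_congr rfl fun S _ => by split <;> rfl
    rw [hBeq]
    have hbound : ∀ u : V, ∑ v : V, Pr μ (fun S => u ∈ S ∧ v ∈ S)
        ≤ α / r + (r - 1) * (α / (m * r)) := by
      intro u
      have hsplit := Finset.add_sum_erase Finset.univ
        (fun v => Pr μ (fun S => u ∈ S ∧ v ∈ S)) (Finset.mem_univ u)
      rw [← hsplit]
      have hdiag : Pr μ (fun S => u ∈ S ∧ u ∈ S) = α / r := by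
        rw [← h1 u]
        unfold Pr
        exact Finset.sum_congr rfl fun S _ => by by_cases h : u ∈ S <;> simp [h]
      have hoff : ∑ v ∈ Finset.univ.erase u, Pr μ (fun S => u ∈ S ∧ v ∈ S)
          ≤ (r - 1) * (α / (m * r)) := by
        have hcard : (((Finset.univ : Finset V).erase u).card : ℝ) = r - 1 := by
          rw [Finset.card_erase_of_mem (Finset.mem_univ u), Finset.card_univ, hV]
          have : (1:ℕ) ≤ ⌈m⌉₊ := by omega
          push_cast [this]
          ring
        calc ∑ v ∈ Finset.univ.erase u, Pr μ (fun S => u ∈ S ∧ v ∈ S)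
            ≤ (((Finset.univ : Finset V).erase u).card) • (α / (m * r)) := by
              refine Finset.sum_le_card_nsmul _ _ _ fun v hv => ?_
              exact h2 u v (Ne.symm (Finset.ne_of_mem_erase hv))
          _ = (r - 1) * (α / (m * r)) := by rw [nsmul_eq_mul, hcard]
      linarith [hdiag, hoff]
    calc ∑ u : V, ∑ v : V, Pr μ (fun S => u ∈ S ∧ v ∈ S)
        ≤ ∑ _u : V, (α / r + (r - 1) * (α / (m * r))) :=
          Finset.sum_le_sum fun u _ => hbound u
      _ = r * (α / r + (r - 1) * (α / (m * r))) := by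
          rw [Finset.sum_const, Finset.card_univ, hV, nsmul_eq_mul]
      _ = α * (m + r - 1) / m := by
          field_simp
          ring
  -- bound on μ univ
  obtain ⟨u0, v0, huv⟩ := Fintype.exists_pair_of_one_lt_card hV2
  set p : ℝ := μ Finset.univ with hpdef
  have hp0 : 0 ≤ p := hμ0 _
  have hp : p ≤ α / (m * r) := by
    refine le_trans ?_ (h2 u0 v0 huv)
    have heq : Pr μ (fun S => u0 ∈ S ∧ v0 ∈ S)
        = ∑ S : Finset V, (if u0 ∈ S ∧ v0 ∈ S then μ S else 0) := by
      unfold Pr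
      exact Finset.sum_congr rfl fun S _ => by split <;> rfl
    rw [heq]
    have hpval : p = (if (u0 ∈ (Finset.univ : Finset V) ∧ v0 ∈ (Finset.univ : Finset V))
        then μ Finset.univ else 0) := by simp [hpdef]
    rw [hpval]
    refine Finset.single_le_sum (f := fun S : Finset V => if u0 ∈ S ∧ v0 ∈ S then μ S else 0)
      (fun S _ => ?_) (Finset.mem_univ _)
    split
    · exact hμ0 _
    · exact le_rfl
  -- cut sets
  set T : Finset (Finset V) :=
    Finset.univ.filter (fun S => S ≠ ∅ ∧ S ≠ Finset.univ) with hT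
  have hTc : (Finset.univ.filter (fun S : Finset V => ¬(S ≠ ∅ ∧ S ≠ Finset.univ)))
      = {∅, Finset.univ} := by
    ext S
    simp only [Finset.mem_filter, Finset.mem_univ, true_and, Finset.mem_insert,
      Finset.mem_singleton, not_and_or, not_not]
  have hsplit : ∀ f : Finset V → ℝ, f ∅ = 0 →
      ∑ S : Finset V, f S = (∑ S ∈ T, f S) + f Finset.univ := by
    intro f hf0
    rw [← Finset.sum_filter_add_sum_filter_not Finset.univ
      (fun S => S ≠ ∅ ∧ S ≠ Finset.univ) f, hTc, Finset.sum_pair hEne, hf0, zero_add, hT]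
  have hsA : ∑ S ∈ T, μ S * (S.card : ℝ) = α - r * p := by
    have := hsplit (fun S => μ S * (S.card:ℝ)) (by simp)
    simp only [hcardr] at this
    rw [hA, ← hpdef] at this
    linarith [this]
  have hsB : ∑ S ∈ T, μ S * (S.card : ℝ)^2 ≤ α * (m + r - 1) / m - r^2 * p := by
    have := hsplit (fun S => μ S * (S.card:ℝ)^2) (by simp)
    simp only [hcardr] at this
    rw [← hpdef] at this
    linarith [hB]
  have hsB0 : 0 ≤ ∑ S ∈ T, μ S * (S.card : ℝ)^2 :=
    Finset.sum_nonneg fun S _ => mul_nonneg (hμ0 _) (sq_nonneg _)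
  have hP0 : 0 ≤ ∑ S ∈ T, μ S := Finset.sum_nonneg fun S _ => hμ0 _
  -- Cauchy-Schwarz
  have hCS : (∑ S ∈ T, μ S * (S.card:ℝ))^2
      ≤ (∑ S ∈ T, μ S) * (∑ S ∈ T, μ S * (S.card:ℝ)^2) := by
    refine Finset.sum_sq_le_sum_mul_sum_of_sq_eq_mul T
      (fun S _ => hμ0 _) (fun S _ => mul_nonneg (hμ0 _) (sq_nonneg _)) (fun S _ => by ring)
  -- Pr of the cut event
  have hPrT : Pr μ (fun S => S ≠ ∅ ∧ S ≠ Finset.univ) = ∑ S ∈ T, μ S := by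
    rw [hT, Finset.sum_filter]
    unfold Pr
    exact Finset.sum_congr rfl fun S _ => by split <;> rfl
  rw [hPrT] at h3
  -- key inequalities
  have hrp : r * p ≤ α / m := by
    have h := mul_le_mul_of_nonneg_left hp hr0.le
    have e : r * (α / (m * r)) = α / m := by
      field_simp
    rw [e] at h
    exact h
  have hsApos : 0 < α - r * p := by
    have : α / m < α := by
      rw [div_lt_iff₀ hmpos]
      calc α = α * 1 := by ring
        _ < α * m := by
            exact mul_lt_mul_of_pos_left (by linarith) hα
    linarith
  have hkey : (α / 2) * (∑ S ∈ T, μ S * (S.card:ℝ)^2) ≤ (α - r * p)^2 := by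
    have h1' : (α / 2) * (∑ S ∈ T, μ S * (S.card:ℝ)^2)
        ≤ (α / 2) * (α * (m + r - 1) / m - r^2 * p) := by
      apply mul_le_mul_of_nonneg_left hsB (by linarith)
    refine le_trans h1' ?_
    rw [div_mul_eq_mul_div, ← sub_nonneg]
    have expand : (α - r * p)^2 - (α * (α * (m + r - 1) / m - r^2 * p)) / 2
        = (α^2 * (m - r + 1) + α * r * p * m * (r - 4) + 2 * m * r^2 * p^2) / (2 * m) := by
      field_simp
      ring
    rw [expand]
    apply div_nonneg _ (by linarith)
    have t1 : 0 ≤ α^2 * (m - r + 1) := mul_nonneg (sq_nonneg α) (by linarith)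
    have t2 : 0 ≤ α * r * p * m * (r - 4) := by
      apply mul_nonneg
      apply mul_nonneg
      apply mul_nonneg
      apply mul_nonneg hα.le hr0.le
      exact hp0
      exact hmpos.le
      linarith
    have t3 : 0 ≤ 2 * m * r^2 * p^2 := by positivity
    linarith
  -- conclude α/2 ≤ Pr(cut)
  rw [hsA] at hCS
  have hsBpos : 0 < ∑ S ∈ T, μ S * (S.card:ℝ)^2 := by
    by_contra hcon
    push_neg at hcon
    have hB0 : ∑ S ∈ T, μ S * (S.card:ℝ)^2 = 0 := le_antisymm hcon hsB0
    rw [hB0, mul_zero] at hCS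
    have h2pos : 0 < (α - r * p)^2 := pow_pos hsApos 2
    linarith
  have hhalf : α / 2 ≤ ∑ S ∈ T, μ S := by
    have htr := le_trans hkey hCS
    exact le_of_mul_le_mul_right htr hsBpos
  -- finish
  have h' : α / 2 ≤ α * D * (2 / r) := le_trans hhalf h3
  have h'' : (α / 2) * r ≤ (α * D * (2 / r)) * r := mul_le_mul_of_nonneg_right h' hr0.le
  have h3' : (α * D * (2 / r)) * r = 2 * α * D := by field_simp
  rw [h3'] at h''
  by_contra hcon
  push_neg at hcon
  have hlt : α * D < α * (r / 4) := mul_lt_mul_of_pos_left hcon hα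
  linarith


end
end

section
/- Let H = (V,E) be a hypergraph with |V| = n, let (ū)_{u∈V} be vectors in a real inner product space with Σ_{u∈V} ‖ū‖² = 1, and let sdp = Σ_{e∈E} max_{u,v∈e} ‖ū − v̄‖² > 0. Let S' be a random subset of V such that |S'| < n holds with probability 1, and suppose that for some α > 0 and D > 0: Pr(u ∈ S') ≥ (α/2)‖ū‖² for every u ∈ V, and Pr(e is cut by S') ≤ α·D·max_{u,v∈e} ‖ū − v̄‖² for every e ∈ E. Then Pr(S' ≠ ∅ and |E_cut(S')| < 4·D·sdp·|S'|) ≥ α/(4n). -/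
open scoped Classical BigOperators RealInnerProductSpace

noncomputable section

private lemma aux_card_sum {V : Type*} [Fintype V] [DecidableEq V]
    (S : Finset V) (r : ℝ) :
    (∑ v : V, if v ∈ S then r else 0) = r * (S.card : ℝ) := by
  simp [Finset.sum_ite_mem, mul_comm]

private lemma aux_cut_sum {V ι : Type*} [DecidableEq V] [Fintype ι]
    (ed : ι → Finset V) (S : Finset V) (r : ℝ) :
    (∑ i : ι, if Cuts S (ed i) then r else 0) = r * (cutCount ed S : ℝ) := by
  classical
  rw [cutCount]
  rw [← Finset.sum_filter]
  rw [Finset.sum_const, nsmul_eq_mul, mul_comm]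

theorem stmt_11 {V ι H : Type*} [Fintype V] [DecidableEq V] [Fintype ι]
    [NormedAddCommGroup H] [InnerProductSpace ℝ H]
    (ed : ι → Finset V) (hed : ∀ i, (ed i).Nonempty)
    (x : V → H) (hx : ∑ u : V, ‖x u‖ ^ 2 = 1)
    (hsdp : 0 < sdpValue ed x)
    (μ : Finset V → ℝ) (hμ : IsProbDist μ)
    (hfull : Pr μ (fun S => S.card < Fintype.card V) = 1)
    (α D : ℝ) (hα : 0 < α) (hD : 0 < D)
    (h1 : ∀ u : V, α / 2 * ‖x u‖ ^ 2 ≤ Pr μ (fun S => u ∈ S))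
    (h2 : ∀ i : ι, Pr μ (fun S => Cuts S (ed i)) ≤ α * D * maxDistSq x (ed i)) :
    α / (4 * (Fintype.card V : ℝ)) ≤
      Pr μ (fun S => S.Nonempty ∧
        (cutCount ed S : ℝ) < 4 * D * sdpValue ed x * S.card) := by
  classical
  have hV : Nonempty V := by
    by_contra h
    rw [not_nonempty_iff] at h
    simp [Finset.univ_eq_empty] at hx
  have hn : (0:ℝ) < (Fintype.card V : ℝ) := by
    exact_mod_cast Fintype.card_pos
  set sdp := sdpValue ed x with hsdpdef
  set c := 4 * D * sdp with hcdef
  have hc : 0 < c := by positivity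
  -- Step A: α/2 ≤ E[|S|]
  have hA : α / 2 ≤ ∑ S : Finset V, μ S * (S.card : ℝ) := by
    calc α / 2 = ∑ u : V, α / 2 * ‖x u‖ ^ 2 := by
          rw [← Finset.mul_sum, hx, mul_one]
      _ ≤ ∑ u : V, Pr μ (fun S => u ∈ S) := Finset.sum_le_sum fun u _ => h1 u
      _ = ∑ S : Finset V, μ S * (S.card : ℝ) := by
          unfold Pr
          rw [Finset.sum_comm]
          refine Finset.sum_congr rfl fun S _ => ?_
          convert aux_card_sum S (μ S) using 2
          split_ifs <;> rfl
  -- Step B: E[cut] ≤ α D sdp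
  have hB : ∑ S : Finset V, μ S * (cutCount ed S : ℝ) ≤ α * D * sdp := by
    calc ∑ S : Finset V, μ S * (cutCount ed S : ℝ)
        = ∑ i : ι, Pr μ (fun S => Cuts S (ed i)) := by
          unfold Pr
          rw [Finset.sum_comm]
          refine Finset.sum_congr rfl fun S _ => ?_
          symm
          convert aux_cut_sum ed S (μ S) using 2
      _ ≤ ∑ i : ι, α * D * maxDistSq x (ed i) := Finset.sum_le_sum fun i _ => h2 i
      _ = α * D * sdp := by rw [hsdpdef, sdpValue, ← Finset.mul_sum]
  -- Step C: E[|S| - cut/c] ≤ n * Pr(event)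
  set P : Finset V → Prop := fun S => S.Nonempty ∧
    (cutCount ed S : ℝ) < 4 * D * sdpValue ed x * S.card with hP
  have hC : ∑ S : Finset V, μ S * ((S.card : ℝ) - (cutCount ed S : ℝ) / c)
      ≤ (Fintype.card V : ℝ) * Pr μ P := by
    unfold Pr
    rw [Finset.mul_sum]
    refine Finset.sum_le_sum fun S _ => ?_
    by_cases hE : P S
    · rw [if_pos hE]
      have h1' : (S.card : ℝ) ≤ (Fintype.card V : ℝ) := by
        exact_mod_cast Finset.card_le_univ S
      have h2' : (0:ℝ) ≤ (cutCount ed S : ℝ) / c :=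
        div_nonneg (Nat.cast_nonneg _) hc.le
      have hμS := hμ.1 S
      nlinarith
    · rw [if_neg hE]
      have hY : (S.card : ℝ) - (cutCount ed S : ℝ) / c ≤ 0 := by
        rcases Finset.eq_empty_or_nonempty S with h | h
        · simp only [h, Finset.card_empty, Nat.cast_zero, zero_sub, neg_nonpos]
          positivity
        · have hle : 4 * D * sdpValue ed x * S.card ≤ (cutCount ed S : ℝ) := by
            by_contra hlt
            exact hE ⟨h, lt_of_not_ge hlt⟩
          rw [sub_nonpos, le_div_iff₀ hc]
          calc (S.card : ℝ) * c = 4 * D * sdpValue ed x * S.card := by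
                rw [hcdef, hsdpdef]; ring
            _ ≤ (cutCount ed S : ℝ) := hle
      have hμS := hμ.1 S
      nlinarith
  -- combine
  have hsplit : ∑ S : Finset V, μ S * ((S.card : ℝ) - (cutCount ed S : ℝ) / c)
      = (∑ S : Finset V, μ S * (S.card : ℝ))
        - (∑ S : Finset V, μ S * (cutCount ed S : ℝ)) / c := by
    rw [Finset.sum_div, ← Finset.sum_sub_distrib]
    refine Finset.sum_congr rfl fun S _ => ?_
    field_simp
  have hquarter : (∑ S : Finset V, μ S * (cutCount ed S : ℝ)) / c ≤ α / 4 := by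
    rw [div_le_iff₀ hc]
    calc ∑ S : Finset V, μ S * (cutCount ed S : ℝ) ≤ α * D * sdp := hB
      _ = α / 4 * c := by rw [hcdef]; ring
  have hkey : α / 4 ≤ (Fintype.card V : ℝ) * Pr μ P := by
    calc α / 4 = α / 2 - α / 4 := by ring
      _ ≤ (∑ S : Finset V, μ S * (S.card : ℝ))
            - (∑ S : Finset V, μ S * (cutCount ed S : ℝ)) / c := by
          exact sub_le_sub hA hquarter
      _ = ∑ S : Finset V, μ S * ((S.card : ℝ) - (cutCount ed S : ℝ) / c) :=
          hsplit.symm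
      _ ≤ (Fintype.card V : ℝ) * Pr μ P := hC
  rw [div_le_iff₀ (by positivity)]
  nlinarith

end
end

section
/- Let ū and v̄ be nonzero vectors in a real inner product space and let β ∈ (0,1). If ‖ū − v̄‖² ≥ β·min(‖ū‖², ‖v̄‖²), then 2 − 2⟨ū, v̄⟩/max(‖ū‖², ‖v̄‖²) ≥ β. -/
open scoped RealInnerProductSpace

theorem stmt_16 {H : Type*} [NormedAddCommGroup H] [InnerProductSpace ℝ H]
    (u v : H) (hu : u ≠ 0) (hv : v ≠ 0)
    (β : ℝ) (hβ0 : 0 < β) (hβ1 : β < 1)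
    (h : β * min (‖u‖ ^ 2) (‖v‖ ^ 2) ≤ ‖u - v‖ ^ 2) :
    β ≤ 2 - 2 * (⟪u, v⟫ : ℝ) / max (‖u‖ ^ 2) (‖v‖ ^ 2) := by
  have key : ‖u - v‖ ^ 2 = ‖u‖ ^ 2 - 2 * ⟪u, v⟫ + ‖v‖ ^ 2 := by
    rw [@norm_sub_sq_real]
  have hu2 : (0:ℝ) < ‖u‖ ^ 2 := pow_pos (norm_pos_iff.mpr hu) 2
  have hv2 : (0:ℝ) < ‖v‖ ^ 2 := pow_pos (norm_pos_iff.mpr hv) 2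
  rcases le_total (‖u‖ ^ 2) (‖v‖ ^ 2) with hle | hle
  · rw [min_eq_left hle] at h
    rw [max_eq_right hle]
    have hd : 2 * (⟪u, v⟫ : ℝ) / ‖v‖ ^ 2 ≤ 2 - β :=
      (div_le_iff₀ hv2).mpr (by nlinarith)
    linarith
  · rw [min_eq_right hle] at h
    rw [max_eq_left hle]
    have hd : 2 * (⟪u, v⟫ : ℝ) / ‖u‖ ^ 2 ≤ 2 - β :=
      (div_le_iff₀ hu2).mpr (by nlinarith)
    linarith
end
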